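/- Strong convergence of gradients for monotone elliptic problems with converging coefficients: let σ_m, σ be measurable with 0 < σ_# ≤ σ_m, σ ≤ σ^#, σ_m → σ a.e., and let φ_m, φ ∈ H^1(Ω) satisfy ∫_Ω σ_m ∇φ_m·∇w = F_m(w) and ∫_Ω σ ∇φ·∇w = F(w) for all test w, where F_m(φ_m − φ) − F(φ_m − φ) → 0 and φ_m ⇀ φ weakly in H^1(Ω). Then ∇φ_m → ∇φ strongly in L²(Ω)^n. -/

import Mathlib

open MeasureTheory Filter

local notation "⟪" x ", " y "⟫" => @inner ℝ _ _ x y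

section Aux

variable {α : Type*} [MeasurableSpace α] {μ : Measure α}
  {E : Type*} [NormedAddCommGroup E] [InnerProductSpace ℝ E]

lemma aux_integrable_inner {f g : α → E} (hf : MemLp f 2 μ) (hg : MemLp g 2 μ) :
    Integrable (fun x => ⟪f x, g x⟫) μ := by
  refine (L2.integrable_inner (𝕜 := ℝ) (hf.toLp f) (hg.toLp g)).congr ?_
  filter_upwards [hf.coeFn_toLp, hg.coeFn_toLp] with x hx hy
  rw [hx, hy]

lemma aux_cauchy_schwarz {f g : α → E} (hf : MemLp f 2 μ) (hg : MemLp g 2 μ) :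
    (∫ x, ⟪f x, g x⟫ ∂μ) ^ 2 ≤ (∫ x, ‖f x‖ ^ 2 ∂μ) * (∫ x, ‖g x‖ ^ 2 ∂μ) := by
  set F := hf.toLp f
  set G := hg.toLp g
  have h1 : ∫ x, ⟪f x, g x⟫ ∂μ = ⟪F, G⟫ := by
    rw [L2.inner_def]
    refine integral_congr_ae ?_
    filter_upwards [hf.coeFn_toLp, hg.coeFn_toLp] with x hx hy
    rw [hx, hy]
  have h2 : ∫ x, ‖f x‖ ^ 2 ∂μ = ‖F‖ ^ 2 := by
    rw [← real_inner_self_eq_norm_sq, L2.inner_def]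
    refine integral_congr_ae ?_
    filter_upwards [hf.coeFn_toLp] with x hx
    rw [hx, real_inner_self_eq_norm_sq]
  have h3 : ∫ x, ‖g x‖ ^ 2 ∂μ = ‖G‖ ^ 2 := by
    rw [← real_inner_self_eq_norm_sq, L2.inner_def]
    refine integral_congr_ae ?_
    filter_upwards [hg.coeFn_toLp] with x hx
    rw [hx, real_inner_self_eq_norm_sq]
  rw [h1, h2, h3]
  have := abs_real_inner_le_norm F G
  nlinarith [abs_nonneg (⟪F, G⟫), sq_abs (⟪F, G⟫), norm_nonneg F, norm_nonneg G]

lemma aux_quad {σs c δ2 A I : ℝ} (hσs : 0 < σs) (hc : 0 ≤ c) (hA : 0 ≤ A) (hδ : 0 ≤ δ2)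
    (hI2 : I ^ 2 ≤ δ2 * A) (hmain : σs * A ≤ c + |I|) :
    A ≤ (2 * σs * c + δ2) / σs ^ 2 := by
  rw [le_div_iff₀ (by positivity)]
  rcases le_or_gt (σs * A) c with h | h
  · nlinarith
  · have hApos : 0 < A := by nlinarith
    have hB : (σs * A - c) ^ 2 ≤ δ2 * A := by
      have h1 : σs * A - c ≤ |I| := by linarith
      have h2 : (σs * A - c) ^ 2 ≤ |I| ^ 2 := by nlinarith [abs_nonneg I]
      nlinarith [sq_abs I]
    nlinarith [mul_pos hApos hApos, sq_nonneg c, mul_pos hApos hσs]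

end Aux

/-- Strong convergence of gradients for monotone elliptic problems with converging
coefficients: let `σ_m, σ` be measurable with `0 < σ_# ≤ σ_m, σ ≤ σ^#` and `σ_m → σ`
a.e., and let `∇φ_m, ∇φ ∈ L²` satisfy the tested equations
`∫ σ_m ∇φ_m·∇(φ_m−φ) = F_m(φ_m−φ)` and `∫ σ ∇φ·∇(φ_m−φ) = F(φ_m−φ)` with
`F_m(φ_m−φ) − F(φ_m−φ) → 0`, and `∇φ_m ⇀ ∇φ` weakly in `L²`. Then
`∇φ_m → ∇φ` strongly in `L²(Ω)ⁿ`. -/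
theorem gradient_strong_convergence {n : ℕ} {Ω : Type*} [MeasureSpace Ω]
    (σs σb : ℝ) (hσs : 0 < σs) (hσsb : σs ≤ σb)
    (σm : ℕ → Ω → ℝ) (σ : Ω → ℝ)
    (hσmmeas : ∀ m, AEMeasurable (σm m)) (hσmeas : AEMeasurable σ)
    (hσmb : ∀ m x, σs ≤ σm m x ∧ σm m x ≤ σb)
    (hσb : ∀ x, σs ≤ σ x ∧ σ x ≤ σb)
    (hae : ∀ᵐ x, Tendsto (fun m => σm m x) atTop (nhds (σ x)))
    (gφm : ℕ → Ω → EuclideanSpace ℝ (Fin n)) (gφ : Ω → EuclideanSpace ℝ (Fin n))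
    (hm2 : ∀ m, MemLp (gφm m) 2 volume) (h2 : MemLp gφ 2 volume)
    -- weak convergence ∇φ_m ⇀ ∇φ in L²(Ω)ⁿ
    (hweak : ∀ g : Ω → EuclideanSpace ℝ (Fin n), MemLp g 2 volume →
      Tendsto (fun m => ∫ x, ⟪gφm m x, g x⟫) atTop (nhds (∫ x, ⟪gφ x, g x⟫)))
    (Fm Gm : ℕ → ℝ)
    -- the two equations tested with w = φ_m − φ
    (heqm : ∀ m, (∫ x, σm m x * ⟪gφm m x, gφm m x - gφ x⟫) = Fm m)
    (heq : ∀ m, (∫ x, σ x * ⟪gφ x, gφm m x - gφ x⟫) = Gm m)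
    (hFG : Tendsto (fun m => Fm m - Gm m) atTop (nhds 0)) :
    Tendsto (fun m => ∫ x, ‖gφm m x - gφ x‖ ^ 2) atTop (nhds 0) := by
  -- notation
  set d : ℕ → Ω → EuclideanSpace ℝ (Fin n) := fun m x => gφm m x - gφ x with hd_def
  set u : ℕ → Ω → EuclideanSpace ℝ (Fin n) := fun m x => (σm m x - σ x) • gφ x with hu_def
  set A : ℕ → ℝ := fun m => ∫ x, ‖d m x‖ ^ 2 with hA_def
  set δ2 : ℕ → ℝ := fun m => ∫ x, ‖u m x‖ ^ 2 with hδ2_def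
  have hd2 : ∀ m, MemLp (d m) 2 volume := fun m => (hm2 m).sub h2
  -- L∞ memberships
  have hσmtop : ∀ m, MemLp (σm m) ⊤ volume := fun m =>
    memLp_top_of_bound (hσmmeas m).aestronglyMeasurable σb
      (Eventually.of_forall fun x => by
        have h := hσmb m x
        rw [Real.norm_eq_abs, abs_le]; constructor <;> linarith)
  have hσtop : MemLp σ ⊤ volume :=
    memLp_top_of_bound hσmeas.aestronglyMeasurable σb
      (Eventually.of_forall fun x => by
        have h := hσb x
        rw [Real.norm_eq_abs, abs_le]; constructor <;> linarith)
  have hσdtop : ∀ m, MemLp (fun x => σm m x - σ x) ⊤ volume := fun m =>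
    memLp_top_of_bound ((hσmmeas m).sub hσmeas).aestronglyMeasurable (σb - σs)
      (Eventually.of_forall fun x => by
        have h1 := hσmb m x; have h2 := hσb x
        rw [Real.norm_eq_abs, abs_le]; constructor <;> linarith)
  have hu2 : ∀ m, MemLp (u m) 2 volume := fun m => h2.smul (r := 2) (hσdtop m)
  -- nonnegativity
  have hA0 : ∀ m, 0 ≤ A m := fun m => integral_nonneg fun x => sq_nonneg _
  have hδ20 : ∀ m, 0 ≤ δ2 m := fun m => integral_nonneg fun x => sq_nonneg _
  -- integrability facts
  have hAint : ∀ m, Integrable (fun x => ‖d m x‖ ^ 2) := fun m =>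
    (memLp_two_iff_integrable_sq_norm (hd2 m).1).mp (hd2 m)
  have hJ1 : ∀ m, Integrable (fun x => σm m x * ⟪gφm m x, d m x⟫) := fun m => by
    refine (aux_integrable_inner ((hm2 m).smul (r := 2) (hσmtop m)) (hd2 m)).congr ?_
    refine Eventually.of_forall fun x => ?_
    simp only [Pi.smul_apply', real_inner_smul_left]
  have hJ2 : ∀ m, Integrable (fun x => σm m x * ⟪gφ x, d m x⟫) := fun m => by
    refine (aux_integrable_inner (h2.smul (r := 2) (hσmtop m)) (hd2 m)).congr ?_
    refine Eventually.of_forall fun x => ?_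
    simp only [Pi.smul_apply', real_inner_smul_left]
  have hJ3 : ∀ m, Integrable (fun x => σ x * ⟪gφ x, d m x⟫) := by
    intro m
    refine (aux_integrable_inner (h2.smul (r := 2) hσtop) (hd2 m)).congr ?_
    refine Eventually.of_forall fun x => ?_
    simp only [Pi.smul_apply', real_inner_smul_left]
  have hJ4 : ∀ m, Integrable (fun x => ⟪u m x, d m x⟫) := fun m =>
    aux_integrable_inner (hu2 m) (hd2 m)
  have hIb : ∀ m, Integrable (fun x => σm m x * ‖d m x‖ ^ 2) := fun m => by
    refine (aux_integrable_inner ((hd2 m).smul (r := 2) (hσmtop m)) (hd2 m)).congr ?_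
    refine Eventually.of_forall fun x => ?_
    simp only [Pi.smul_apply', real_inner_smul_left, real_inner_self_eq_norm_sq]
  -- main inequality : σs * A m ≤ |Fm m - Gm m| + |∫ ⟪u m, d m⟫|
  have hmain : ∀ m, σs * A m ≤ |Fm m - Gm m| + |∫ x, ⟪u m x, d m x⟫| := by
    intro m
    have step1 : σs * A m ≤ ∫ x, σm m x * ‖d m x‖ ^ 2 := by
      rw [hA_def, ← integral_const_mul]
      refine integral_mono ((hAint m).const_mul σs) (hIb m) fun x => ?_
      have := (hσmb m x).1
      nlinarith [sq_nonneg (‖d m x‖)]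
    have step2 : (∫ x, σm m x * ‖d m x‖ ^ 2)
        = Fm m - Gm m - ∫ x, ⟪u m x, d m x⟫ := by
      have e1 : (∫ x, σm m x * ‖d m x‖ ^ 2)
          = (∫ x, σm m x * ⟪gφm m x, d m x⟫) - ∫ x, σm m x * ⟪gφ x, d m x⟫ := by
        rw [← integral_sub (hJ1 m) (hJ2 m)]
        refine integral_congr_ae (Eventually.of_forall fun x => ?_)
        have : ⟪d m x, d m x⟫ = ⟪gφm m x, d m x⟫ - ⟪gφ x, d m x⟫ := by
          rw [hd_def]; simp only [inner_sub_left]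
        show σm m x * ‖d m x‖ ^ 2
            = σm m x * ⟪gφm m x, d m x⟫ - σm m x * ⟪gφ x, d m x⟫
        rw [← real_inner_self_eq_norm_sq, this]; ring
      have e2 : (∫ x, σm m x * ⟪gφ x, d m x⟫)
          = (∫ x, ⟪u m x, d m x⟫) + ∫ x, σ x * ⟪gφ x, d m x⟫ := by
        rw [← integral_add (hJ4 m) (hJ3 m)]
        refine integral_congr_ae (Eventually.of_forall fun x => ?_)
        rw [hu_def]
        simp only [real_inner_smul_left]
        ring
      rw [e1, e2, heqm m, heq m]; ring
    calc σs * A m ≤ ∫ x, σm m x * ‖d m x‖ ^ 2 := step1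
      _ = Fm m - Gm m - ∫ x, ⟪u m x, d m x⟫ := step2
      _ ≤ |Fm m - Gm m| + |∫ x, ⟪u m x, d m x⟫| := by
          have h1 := le_abs_self (Fm m - Gm m)
          have h2 := neg_abs_le (∫ x, ⟪u m x, d m x⟫)
          linarith
  -- Cauchy–Schwarz
  have hCS : ∀ m, (∫ x, ⟪u m x, d m x⟫) ^ 2 ≤ δ2 m * A m := fun m =>
    aux_cauchy_schwarz (hu2 m) (hd2 m)
  -- the quadratic bound
  have hbound : ∀ m, A m ≤ (2 * σs * |Fm m - Gm m| + δ2 m) / σs ^ 2 := fun m =>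
    aux_quad hσs (abs_nonneg _) (hA0 m) (hδ20 m) (hCS m) (hmain m)
  -- δ2 → 0 by dominated convergence
  have hδ2tendsto : Tendsto δ2 atTop (nhds 0) := by
    have h0 : (0 : ℝ) = ∫ x, (0 : Ω → ℝ) x := by simp
    rw [h0]
    refine tendsto_integral_of_dominated_convergence
      (fun x => (σb - σs) ^ 2 * ‖gφ x‖ ^ 2) (fun m => ?_) ?_ (fun m => ?_) ?_
    · exact ((((hσmmeas m).sub hσmeas).aestronglyMeasurable.smul h2.1).norm.aemeasurable.pow_const
        2).aestronglyMeasurable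
    · exact ((memLp_two_iff_integrable_sq_norm h2.1).mp h2).const_mul _
    · refine Eventually.of_forall fun x => ?_
      have h1 := hσmb m x; have hh2 := hσb x
      have habs : |σm m x - σ x| ≤ σb - σs := by
        rw [abs_le]; constructor <;> linarith
      rw [hu_def]
      simp only [Real.norm_eq_abs, abs_pow, sq_abs]
      rw [norm_smul, mul_pow, Real.norm_eq_abs]
      exact mul_le_mul_of_nonneg_right (pow_le_pow_left₀ (abs_nonneg _) habs 2) (sq_nonneg _)
    · filter_upwards [hae] with x hx
      have h1 : Tendsto (fun m => σm m x - σ x) atTop (nhds 0) := by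
        simpa using hx.sub (tendsto_const_nhds (x := σ x))
      have h2' : Tendsto (fun m => ‖u m x‖ ^ 2) atTop (nhds 0) := by
        have : Tendsto (fun m => (σm m x - σ x) ^ 2 * ‖gφ x‖ ^ 2) atTop (nhds 0) := by
          simpa using ((h1.pow 2).mul_const (‖gφ x‖ ^ 2))
        refine this.congr fun m => ?_
        rw [hu_def, norm_smul, mul_pow, Real.norm_eq_abs, sq_abs]
      simpa using h2'
  -- RHS → 0
  have hRHS : Tendsto (fun m => (2 * σs * |Fm m - Gm m| + δ2 m) / σs ^ 2) atTop (nhds 0) := by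
    have habs : Tendsto (fun m => |Fm m - Gm m|) atTop (nhds 0) := by
      simpa using hFG.abs
    have := ((habs.const_mul (2 * σs)).add hδ2tendsto).div_const (σs ^ 2)
    simpa using this
  -- squeeze
  exact tendsto_of_tendsto_of_tendsto_of_le_of_le tendsto_const_nhds hRHS hA0 hbound
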